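/- For d = 2k+1 with k ≥ 1, the modulus squared of the Harish-Chandra c-function satisfies |c(λ,ρ)|² = 4^{2k−1} Γ(k+1/2)² / (π ∏_{l=0}^{k−1}(l² + λ²)) for all real λ ≠ 0, where ρ = k and c(λ,ρ) = 2^{2ρ−1} Γ(iλ) Γ(ρ+1/2) / (√π Γ(ρ+iλ)). -/

import Mathlib

open Complex Real

/-- The Harish-Chandra c-function c(λ,ρ) = 2^{2ρ-1} Γ(iλ) Γ(ρ+1/2) / (√π Γ(ρ+iλ)). -/
noncomputable def harishChandraC (lam ρ : ℝ) : ℂ :=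
  2 ^ (2 * (ρ : ℂ) - 1) * Complex.Gamma (↑lam * Complex.I) * Complex.Gamma (↑ρ + 1 / 2) /
    (↑(Real.sqrt Real.pi) * Complex.Gamma (↑ρ + ↑lam * Complex.I))

lemma gamma_add_nat_aux (z : ℂ) (hz : ∀ n : ℕ, z + n ≠ 0) (k : ℕ) :
    Complex.Gamma (z + k) = (∏ l ∈ Finset.range k, (z + l)) * Complex.Gamma z := by
  induction k with
  | zero => simp
  | succ n ih =>
    have : z + (n + 1 : ℕ) = (z + n) + 1 := by push_cast; ring
    rw [this, Complex.Gamma_add_one _ (hz n), ih, Finset.prod_range_succ]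
    ring

theorem harishChandraC_odd_dim (k : ℕ) (hk : 1 ≤ k) (lam : ℝ) (h : lam ≠ 0) :
    ‖harishChandraC lam (k : ℝ)‖ ^ 2 =
      4 ^ (2 * k - 1) * Real.Gamma ((k : ℝ) + 1 / 2) ^ 2 /
        (Real.pi * ∏ l ∈ Finset.range k, ((l : ℝ) ^ 2 + lam ^ 2)) := by
  set z : ℂ := ↑lam * Complex.I with hz
  have hzn : ∀ n : ℕ, z + n ≠ 0 := by
    intro n hn
    apply h
    have := congrArg Complex.im hn
    simpa [hz] using this
  have hGz : Complex.Gamma z ≠ 0 := by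
    apply Complex.Gamma_ne_zero
    intro m hm
    exact hzn m (by rw [hm]; ring)
  have hshift : Complex.Gamma ((k : ℂ) + z) =
      (∏ l ∈ Finset.range k, (z + l)) * Complex.Gamma z := by
    rw [add_comm, gamma_add_nat_aux z hzn k]
  have habs2 : ‖(2 : ℂ) ^ (2 * (k : ℂ) - 1)‖ = (2 : ℝ) ^ ((2 : ℝ) * k - 1) := by
    rw [show ((2 : ℂ)) = ((2 : ℝ) : ℂ) by norm_num,
      Complex.norm_cpow_eq_rpow_re_of_pos (by norm_num)]
    norm_num
  have hGhalf : ‖Complex.Gamma ((k : ℂ) + 1 / 2)‖ = Real.Gamma ((k : ℝ) + 1 / 2) := by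
    rw [show ((k : ℂ) + 1 / 2) = (((k : ℝ) + 1 / 2 : ℝ) : ℂ) by push_cast; ring,
      Complex.Gamma_ofReal, Complex.norm_real, Real.norm_eq_abs, abs_of_pos]
    exact Real.Gamma_pos_of_pos (by positivity)
  have hprod : ‖∏ l ∈ Finset.range k, (z + l)‖ ^ 2 =
      ∏ l ∈ Finset.range k, ((l : ℝ) ^ 2 + lam ^ 2) := by
    rw [norm_prod, ← Finset.prod_pow]
    refine Finset.prod_congr rfl fun l _ => ?_
    rw [Complex.sq_norm, Complex.normSq_apply]
    simp [hz]
    ring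
  have hGhalfpos : 0 < Real.Gamma ((k : ℝ) + 1 / 2) := Real.Gamma_pos_of_pos (by positivity)
  have hprodpos : 0 < ∏ l ∈ Finset.range k, ((l : ℝ) ^ 2 + lam ^ 2) := by
    apply Finset.prod_pos
    intro l _
    positivity
  simp only [harishChandraC, Complex.ofReal_natCast, ← hz]
  rw [hshift]
  rw [norm_div, norm_mul, norm_mul, norm_mul, norm_mul]
  rw [habs2, hGhalf, Complex.norm_real, Real.norm_eq_abs, _root_.abs_of_nonneg (Real.sqrt_nonneg _)]
  rw [div_pow]
  rw [mul_pow, mul_pow, mul_pow, mul_pow, hprod, Real.sq_sqrt Real.pi_pos.le]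
  have hGzabs : ‖Complex.Gamma z‖ ^ 2 ≠ 0 := by
    simpa using hGz
  have h2 : ((2 : ℝ) ^ ((2 : ℝ) * k - 1)) ^ 2 = 4 ^ (2 * k - 1) := by
    rw [← Real.rpow_natCast _ 2, ← Real.rpow_mul (by norm_num)]
    have h1 : (1 : ℕ) ≤ 2 * k := by omega
    have e : ((2 : ℝ) * k - 1) * ((2 : ℕ) : ℝ) = ((2 * (2 * k - 1) : ℕ) : ℝ) := by
      push_cast [Nat.cast_sub h1]
      ring
    rw [e, Real.rpow_natCast, pow_mul]
    norm_num
  rw [h2]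
  field_simp
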